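/- In the linear 2-layer GNN of the previous statement, the DeepLIFT path contribution with reference graph G0 = empty graph equals the GNN-LRP (γ=0) relevance of the path: for a walk p = (I,K,J) in G1, both equal x_I Θ^{(1)} Θ^{(2)} evaluated at class j, i.e. LRP backpropagation R_p = Σ_i m_{Δh_i → Δz_j} h_i^{(0)} = (x_I Θ^{(1)} Θ^{(2)})_j. -/

import Mathlib

open Finset

/-- For a walk `p = (I, K, J)` in a linear two-layer sum-aggregation GNN:
the GNN-LRP (γ = 0) relevance of the path and the DeepLIFT contribution
(with empty-graph, i.e. all-zero, reference) both equal `(x_I Θ1 Θ2)_j`.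
`zK` is the hidden preactivation vector at node `K` (which equals the hidden
activation since the network is linear), `zj` is the output logit. -/
theorem deeplift_empty_reference_eq_gnnlrp {d d' c : ℕ}
    (x : Fin d → ℝ)
    (Θ1 : Matrix (Fin d) (Fin d') ℝ) (Θ2 : Matrix (Fin d') (Fin c) ℝ)
    (zK : Fin d' → ℝ) (hzK : ∀ v, zK v ≠ 0)
    (j : Fin c) (zj : ℝ) (hzj : zj ≠ 0) :
    -- GNN-LRP relevance of the path
    (∑ i, ∑ v, (x i * Θ1 i v / zK v) * (zK v * Θ2 v j / zj) * zj
      = Matrix.vecMul (Matrix.vecMul x Θ1) Θ2 j) ∧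
    -- DeepLIFT contribution with zero reference: Σ_i m_{Δh_i Δz_j} h_i
    (∑ i, (∑ v, Θ1 i v * Θ2 v j) * x i
      = Matrix.vecMul (Matrix.vecMul x Θ1) Θ2 j) := by
  simp only [Matrix.vecMul, dotProduct, Matrix.vecMul]
  constructor
  · rw [Finset.sum_comm]
    refine Finset.sum_congr rfl fun v _ => ?_
    rw [Finset.sum_mul]
    refine Finset.sum_congr rfl fun i _ => ?_
    field_simp
    rw [div_eq_iff (hzK v)]
    ring
  · simp only [Finset.sum_mul, Finset.mul_sum]
    rw [Finset.sum_comm]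
    refine Finset.sum_congr rfl fun v _ => Finset.sum_congr rfl fun i _ => by ring
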